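/- Let I be a monomial ideal of ℝ[x,y] which in each degree D is spanned by the lex-largest monomials of degree D (a lex-segment ideal), and let e ≥ 0. Then the colon ideal I : y^e is again a lex-segment ideal, and its dimension in degree d equals max(dim I_{d+e} - e, 0). -/

import Mathlib

open MvPolynomial

/-- The exponent vector of the monomial `x^A y^B` in `ℝ[x,y] = MvPolynomial (Fin 2) ℝ`,
with `x = X 0 > y = X 1`. -/
noncomputable def expVec (A B : ℕ) : Fin 2 →₀ ℕ := Finsupp.single 0 A + Finsupp.single 1 B

lemma expVec_zero (A B : ℕ) : expVec A B 0 = A := by simp [expVec]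
lemma expVec_one (A B : ℕ) : expVec A B 1 = B := by simp [expVec]
lemma eq_expVec (f : Fin 2 →₀ ℕ) : f = expVec (f 0) (f 1) := by
  ext i; fin_cases i <;> simp [expVec]
lemma expVec_le {a b A B : ℕ} : expVec a b ≤ expVec A B ↔ a ≤ A ∧ b ≤ B := by
  constructor
  · intro h
    exact ⟨by simpa [expVec_zero] using h 0, by simpa [expVec_one] using h 1⟩
  · rintro ⟨h1, h2⟩ i
    fin_cases i <;> simpa [expVec_zero, expVec_one]
lemma degree_fin2 (f : Fin 2 →₀ ℕ) : f.degree = f 0 + f 1 := by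
  rw [Finsupp.degree_apply, Finset.sum_subset (Finset.subset_univ f.support)
    (fun i _ hi => by simpa using Finsupp.notMem_support_iff.mp hi)]
  simp [Fin.sum_univ_two]
lemma expVec_degree (A B : ℕ) : (expVec A B).degree = A + B := by
  rw [degree_fin2, expVec_zero, expVec_one]
lemma single_one_add_expVec (e A B : ℕ) : Finsupp.single 1 e + expVec A B = expVec A (B+e) := by
  simp only [expVec, Finsupp.single_add]; abel

lemma span_inf_homog (S : Set (Fin 2 →₀ ℕ)) (D : ℕ) :
    (Ideal.span ((fun s => monomial s (1:ℝ)) '' S)).restrictScalars ℝ ⊓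
      homogeneousSubmodule (Fin 2) ℝ D =
    Submodule.span ℝ ((fun s => monomial s (1:ℝ)) '' {t | (∃ s ∈ S, s ≤ t) ∧ t.degree = D}) := by
  apply le_antisymm
  · rintro p ⟨hpI, hpH⟩
    rw [← support_sum_monomial_coeff p]
    apply Submodule.sum_mem
    intro t ht
    have hdeg : t.degree = D := by
      by_contra hne
      exact (mem_support_iff.mp ht) (((mem_homogeneousSubmodule _ _).mp hpH) |>.coeff_eq_zero hne)
    have hdom : ∃ s ∈ S, s ≤ t := by
      have := mem_ideal_span_monomial_image.mp hpI
      exact this t ht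
    have : monomial t (coeff t p) = (coeff t p) • monomial t (1:ℝ) := by
      rw [smul_monomial, smul_eq_mul, mul_one]
    rw [this]
    exact Submodule.smul_mem _ _ (Submodule.subset_span ⟨t, ⟨hdom, hdeg⟩, rfl⟩)
  · rw [Submodule.span_le]
    rintro m ⟨t, ⟨⟨s, hs, hst⟩, hdeg⟩, rfl⟩
    refine ⟨?_, ?_⟩
    · show _ ∈ Ideal.span _
      rw [mem_ideal_span_monomial_image]
      intro xi hxi
      rw [support_monomial, if_neg one_ne_zero, Finset.mem_singleton] at hxi
      exact ⟨s, hs, hxi ▸ hst⟩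
    · exact isHomogeneous_monomial 1 hdeg

lemma finrank_span_monomials (T : Finset (Fin 2 →₀ ℕ)) :
    Module.finrank ℝ ↥(Submodule.span ℝ ((fun s => monomial s (1:ℝ)) '' (T : Set (Fin 2 →₀ ℕ)))) = T.card := by
  classical
  have hinj : Function.Injective (fun s : Fin 2 →₀ ℕ => monomial s (1:ℝ)) := by
    have := (basisMonomials (Fin 2) ℝ).injective
    rwa [coe_basisMonomials] at this
  have hli : LinearIndependent ℝ (fun s : (↑T : Set (Fin 2 →₀ ℕ)) => monomial (s : Fin 2 →₀ ℕ) (1:ℝ)) := by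
    have := (basisMonomials (Fin 2) ℝ).linearIndependent.comp
      ((↑) : (↑T : Set (Fin 2 →₀ ℕ)) → (Fin 2 →₀ ℕ)) Subtype.coe_injective
    rwa [coe_basisMonomials] at this
  have hli2 := (linearIndepOn_iff_image (s := (T : Set (Fin 2 →₀ ℕ))) (hinj.injOn)).mp hli
  have inst : Fintype ↥((fun s : Fin 2 →₀ ℕ => monomial s (1:ℝ)) '' (T : Set (Fin 2 →₀ ℕ))) :=
    Set.fintypeImage _ _
  rw [finrank_span_set_eq_card hli2]
  rw [Set.toFinset_image, Finset.card_image_of_injective _ hinj, Finset.toFinset_coe]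

open Classical in
noncomputable def FB (P : ℕ → ℕ → Prop) (D : ℕ) : Finset ℕ :=
  (Finset.range (D+1)).filter (fun B => ∃ a ≤ D - B, ∃ b ≤ B, P a b)

open Classical in
lemma mem_FB {P : ℕ → ℕ → Prop} {D B : ℕ} :
    B ∈ FB P D ↔ B ≤ D ∧ ∃ a ≤ D - B, ∃ b ≤ B, P a b := by
  simp [FB, Finset.mem_filter, Finset.mem_range, Nat.lt_succ_iff]

lemma gen_set_eq (P : ℕ → ℕ → Prop) :
    {m | ∃ A B : ℕ, P A B ∧ m = monomial (expVec A B) (1:ℝ)} =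
    (fun s => monomial s (1:ℝ)) '' {t | ∃ A B : ℕ, P A B ∧ t = expVec A B} := by
  ext m
  constructor
  · rintro ⟨A, B, h, rfl⟩; exact ⟨expVec A B, ⟨A, B, h, rfl⟩, rfl⟩
  · rintro ⟨t, ⟨A, B, h, rfl⟩, rfl⟩; exact ⟨A, B, h, rfl⟩

lemma closure_set_eq (P : ℕ → ℕ → Prop) (D : ℕ) :
    {t : Fin 2 →₀ ℕ | (∃ s ∈ {t | ∃ A B : ℕ, P A B ∧ t = expVec A B}, s ≤ t) ∧ t.degree = D} =
    ↑((FB P D).image (fun B => expVec (D-B) B)) := by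
  ext t
  simp only [Set.mem_setOf_eq, Finset.coe_image, Set.mem_image, Finset.mem_coe]
  constructor
  · rintro ⟨⟨s, ⟨a, b, hP, rfl⟩, hle⟩, hdeg⟩
    rw [degree_fin2] at hdeg
    have hle' : a ≤ t 0 ∧ b ≤ t 1 := expVec_le.mp (by rw [← eq_expVec t]; exact hle)
    refine ⟨t 1, mem_FB.mpr ⟨by omega, a, by omega, b, hle'.2, hP⟩, ?_⟩
    rw [show D - t 1 = t 0 by omega]
    exact (eq_expVec t).symm
  · rintro ⟨B, hB, rfl⟩
    rw [mem_FB] at hB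
    obtain ⟨hBD, a, ha, b, hb, hP⟩ := hB
    refine ⟨⟨expVec a b, ⟨a, b, hP, rfl⟩, expVec_le.mpr ⟨ha, hb⟩⟩, by rw [expVec_degree]; omega⟩

lemma expVec_inj_on_snd (D : ℕ) : Function.Injective (fun B => expVec (D-B) B) := by
  intro B B' h
  have := congrArg (fun f : Fin 2 →₀ ℕ => f 1) h
  simpa [expVec_one] using this

lemma finrank_piece (P : ℕ → ℕ → Prop) (D : ℕ) :
    Module.finrank ℝ ↥((Ideal.span {m | ∃ A B : ℕ, P A B ∧ m = monomial (expVec A B) (1:ℝ)}).restrictScalars ℝ ⊓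
      homogeneousSubmodule (Fin 2) ℝ D) = (FB P D).card := by
  rw [gen_set_eq, span_inf_homog, closure_set_eq, finrank_span_monomials,
    Finset.card_image_of_injective _ (expVec_inj_on_snd D)]

lemma downclosed_eq_range {s : Finset ℕ} (h : ∀ B ∈ s, ∀ B' ≤ B, B' ∈ s) :
    s = Finset.range s.card := by
  have hsub : Finset.range s.card ⊆ s := by
    intro k hk
    rw [Finset.mem_range] at hk
    by_contra hk'
    have hs : s ⊆ Finset.range k := by
      intro B hB
      rw [Finset.mem_range]
      by_contra hlt
      exact hk' (h B hB k (by omega))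
    have := Finset.card_le_card hs
    rw [Finset.card_range] at this
    omega
  exact (Finset.eq_of_subset_of_card_le hsub (by rw [Finset.card_range])).symm

lemma FB_downclosed (N : ℕ → ℕ) (D : ℕ) :
    ∀ B ∈ FB (fun a b => b < N (a+b)) D, ∀ B' ≤ B, B' ∈ FB (fun a b => b < N (a+b)) D := by
  intro B hB B' hB'
  rw [mem_FB] at hB ⊢
  obtain ⟨hBD, a, ha, b, hb, hP⟩ := hB
  refine ⟨by omega, ?_⟩
  by_cases hc : b ≤ B'
  · exact ⟨a, by omega, b, hc, hP⟩
  · refine ⟨a + (b - B'), by omega, B', le_refl _, ?_⟩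
    have he : a + (b - B') + B' = a + b := by omega
    rw [he]
    omega

/-- Colon of a lex-segment ideal by `y^e`.  Let `I ⊆ ℝ[x,y]` be the monomial ideal which
in each degree `D` is spanned by the `N D` lex-largest monomials of degree `D` (with
`N D = dim I_D`, `N D ≤ D+1`): its monomials `x^A y^B` of degree `D = A+B` are those with
`B < N D`.  Then `I : y^e` is again a lex-segment ideal, whose monomials of degree `d`
are those `x^A y^B` with `B < N (d+e) - e`; in particular its dimension in degree `d` is
`max(dim I_{d+e} - e, 0) = N (d+e) - e` (truncated subtraction). -/
theorem lex_segment_colon (N : ℕ → ℕ) (hN : ∀ D, N D ≤ D + 1)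
    (I : Ideal (MvPolynomial (Fin 2) ℝ))
    (hI : I = Ideal.span {m | ∃ A B : ℕ, B < N (A + B) ∧ m = monomial (expVec A B) 1})
    (hdim : ∀ D : ℕ, Module.finrank ℝ
        ↥(I.restrictScalars ℝ ⊓ homogeneousSubmodule (Fin 2) ℝ D) = N D)
    (e : ℕ) :
    I.colon (Ideal.span {(X 1 : MvPolynomial (Fin 2) ℝ) ^ e}) =
        Ideal.span {m | ∃ A B : ℕ, B < N (A + B + e) - e ∧ m = monomial (expVec A B) 1} ∧
      ∀ d : ℕ, Module.finrank ℝ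
          ↥((I.colon (Ideal.span {(X 1 : MvPolynomial (Fin 2) ℝ) ^ e})).restrictScalars ℝ ⊓
            homogeneousSubmodule (Fin 2) ℝ d) = N (d + e) - e := by
  -- cardinality of FB sets
  have hcard : ∀ D, (FB (fun a b => b < N (a+b)) D).card = N D := by
    intro D
    rw [← hdim D, hI, finrank_piece]
  have hrange : ∀ D, FB (fun a b => b < N (a+b)) D = Finset.range (N D) := by
    intro D
    rw [← hcard D]
    exact downclosed_eq_range (FB_downclosed N D)
  -- key membership lemma
  have K : ∀ A B : ℕ, (∃ a ≤ A, ∃ b ≤ B, b < N (a+b)) ↔ B < N (A+B) := by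
    intro A B
    have := hrange (A + B)
    constructor
    · rintro ⟨a, ha, b, hb, hP⟩
      have hmem : B ∈ FB (fun a b => b < N (a+b)) (A+B) :=
        mem_FB.mpr ⟨by omega, a, by omega, b, hb, hP⟩
      rw [this, Finset.mem_range] at hmem
      exact hmem
    · intro hB
      exact ⟨A, le_refl _, B, le_refl _, hB⟩
  -- the colon ideal equality
  have hcolon : I.colon (Ideal.span {(X 1 : MvPolynomial (Fin 2) ℝ) ^ e}) =
      Ideal.span {m | ∃ A B : ℕ, B < N (A + B + e) - e ∧ m = monomial (expVec A B) 1} := by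
    apply le_antisymm
    · intro f hf
      rw [Ideal.mem_colon_span_singleton] at hf
      rw [gen_set_eq, mem_ideal_span_monomial_image]
      intro xi hxi
      have hsup : xi + Finsupp.single 1 e ∈ (f * (X 1 : MvPolynomial (Fin 2) ℝ) ^ e).support := by
        rw [mem_support_iff, X_pow_eq_monomial, coeff_mul_monomial, mul_one]
        exact mem_support_iff.mp hxi
      rw [hI, gen_set_eq] at hf
      obtain ⟨s, ⟨a, b, hab, rfl⟩, hle⟩ := mem_ideal_span_monomial_image.mp hf _ hsup
      have hxie : xi + Finsupp.single 1 e = expVec (xi 0) (xi 1 + e) := by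
        conv_lhs => rw [add_comm, eq_expVec xi]
        exact single_one_add_expVec e (xi 0) (xi 1)
      rw [hxie] at hle
      obtain ⟨h1, h2⟩ := expVec_le.mp hle
      have hK : xi 1 + e < N (xi 0 + (xi 1 + e)) := (K (xi 0) (xi 1 + e)).mp ⟨a, h1, b, h2, hab⟩
      refine ⟨xi, ⟨xi 0, xi 1, ?_, eq_expVec xi⟩, le_refl _⟩
      have he : xi 0 + (xi 1 + e) = xi 0 + xi 1 + e := by omega
      rw [he] at hK
      omega
    · rw [hI, Ideal.span_le]
      rintro m ⟨A, B, hB, rfl⟩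
      rw [SetLike.mem_coe, Ideal.mem_colon_span_singleton, X_pow_eq_monomial, monomial_mul, mul_one]
      apply Ideal.subset_span
      refine ⟨A, B + e, ?_, ?_⟩
      · have : A + (B + e) = A + B + e := by omega
        rw [this]
        omega
      · congr 1
        rw [add_comm]
        exact congrArg _ (single_one_add_expVec e A B)
  refine ⟨hcolon, ?_⟩
  intro d
  rw [hcolon, finrank_piece]
  have : FB (fun A B => B < N (A + B + e) - e) d = Finset.range (N (d+e) - e) := by
    ext B
    rw [mem_FB, Finset.mem_range]
    constructor
    · rintro ⟨hBd, a, ha, b, hb, hP⟩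
      have hP' : b + e < N (a + (b + e)) := by
        have he : a + b + e = a + (b + e) := by omega
        rw [he] at hP
        omega
      have hK : B + e < N ((d - B) + (B + e)) :=
        (K (d - B) (B + e)).mp ⟨a, ha, b + e, by omega, hP'⟩
      have he : (d - B) + (B + e) = d + e := by omega
      rw [he] at hK
      omega
    · intro hB
      have hNe := hN (d + e)
      refine ⟨by omega, d - B, le_refl _, B, le_refl _, ?_⟩
      have he : d - B + B + e = d + e := by omega
      rw [he]
      omega
  rw [this, Finset.card_range]
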